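/- Let σ : ℤ × ℤ → Bool be a spin configuration. Then every site agrees with at least three of its four nearest neighbors (i.e., for every x ∈ ℤ × ℤ, the number of nearest neighbors y of x with σ y = σ x is at least 3) if and only if there exists f : ℤ → Bool satisfying f n = f (n+1) ∨ f (n+1) = f (n+2) for all n ∈ ℤ, such that either σ (i, j) = f i for all (i, j) ∈ ℤ × ℤ, or σ (i, j) = f j for all (i, j) ∈ ℤ × ℤ. -/

import Mathlib

/-- The four nearest-neighbor offsets in `ℤ × ℤ`. -/
def nbrOffsets : Finset (ℤ × ℤ) := {(1, 0), (-1, 0), (0, 1), (0, -1)}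

lemma key (σ : ℤ × ℤ → Bool)
    (h : ∀ x : ℤ × ℤ, 3 ≤ (nbrOffsets.filter (fun d => σ (x + d) = σ x)).card) (a b : ℤ) :
    (σ (a+1,b) = σ (a,b) ∨ σ (a+(-1),b) = σ (a,b)) ∧
    (σ (a,b+1) = σ (a,b) ∨ σ (a,b+(-1)) = σ (a,b)) ∧
    (σ (a+1,b) = σ (a,b) ∨ σ (a,b+1) = σ (a,b)) ∧
    (σ (a+1,b) = σ (a,b) ∨ σ (a,b+(-1)) = σ (a,b)) ∧
    (σ (a+(-1),b) = σ (a,b) ∨ σ (a,b+1) = σ (a,b)) ∧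
    (σ (a+(-1),b) = σ (a,b) ∨ σ (a,b+(-1)) = σ (a,b)) := by
  have H := h (a, b)
  simp only [nbrOffsets, Prod.mk_add_mk, add_zero] at H
  by_cases p1 : σ (a+1,b) = σ (a,b) <;> by_cases p2 : σ (a+(-1),b) = σ (a,b) <;>
    by_cases p3 : σ (a,b+1) = σ (a,b) <;> by_cases p4 : σ (a,b+(-1)) = σ (a,b) <;>
    simp_all [Finset.filter_insert, Finset.filter_singleton, Finset.card_insert_of_notMem,
      Prod.mk.injEq]

lemma card_geV (σ : ℤ × ℤ → Bool) (a b : ℤ)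
    (h3 : σ (a,b+1) = σ (a,b)) (h4 : σ (a,b+(-1)) = σ (a,b))
    (h12 : σ (a+1,b) = σ (a,b) ∨ σ (a+(-1),b) = σ (a,b)) :
    3 ≤ (nbrOffsets.filter (fun d => σ ((a,b) + d) = σ (a,b))).card := by
  simp only [nbrOffsets, Prod.mk_add_mk, add_zero]
  rcases h12 with h1 | h2 <;>
  · by_cases p1 : σ (a+1,b) = σ (a,b) <;> by_cases p2 : σ (a+(-1),b) = σ (a,b) <;>
      simp_all [Finset.filter_insert, Finset.filter_singleton, Finset.card_insert_of_notMem,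
        Prod.mk.injEq]

lemma card_geH (σ : ℤ × ℤ → Bool) (a b : ℤ)
    (h1 : σ (a+1,b) = σ (a,b)) (h2 : σ (a+(-1),b) = σ (a,b))
    (h34 : σ (a,b+1) = σ (a,b) ∨ σ (a,b+(-1)) = σ (a,b)) :
    3 ≤ (nbrOffsets.filter (fun d => σ ((a,b) + d) = σ (a,b))).card := by
  simp only [nbrOffsets, Prod.mk_add_mk, add_zero]
  rcases h34 with h3 | h4 <;>
  · by_cases p3 : σ (a,b+1) = σ (a,b) <;> by_cases p4 : σ (a,b+(-1)) = σ (a,b) <;>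
      simp_all [Finset.filter_insert, Finset.filter_singleton, Finset.card_insert_of_notMem,
        Prod.mk.injEq]

/-- A vertical break propagates horizontally: the two rows are constant. -/
lemma propV (σ : ℤ × ℤ → Bool)
    (h : ∀ x : ℤ × ℤ, 3 ≤ (nbrOffsets.filter (fun d => σ (x + d) = σ x)).card)
    (a b : ℤ) (hd : σ (a, b+1) ≠ σ (a, b)) :
    ∀ i : ℤ, σ (a+i, b) = σ (a, b) ∧ σ (a+i, b+1) = σ (a, b+1) := by
  intro i
  induction i using Int.induction_on with
  | zero => simp
  | succ k ih =>
    have hne : σ (a+k, b+1) ≠ σ (a+k, b) := by rw [ih.1, ih.2]; exact hd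
    have s1 : σ (a+k+1, b) = σ (a+k, b) :=
      ((key σ h (a+k) b).2.2.1).resolve_right hne
    have K2 := (key σ h (a+k) (b+1)).2.2.2.1
    rw [show b+1+(-1) = b from by ring] at K2
    have s2 : σ (a+k+1, b+1) = σ (a+k, b+1) := by
      rcases K2 with h' | h'
      · exact h'
      · exact absurd h'.symm hne
    rw [show a + ((k:ℤ)+1) = a + k + 1 from by ring]
    exact ⟨s1.trans ih.1, s2.trans ih.2⟩
  | pred k ih =>
    have hne : σ (a + -k, b+1) ≠ σ (a + -k, b) := by rw [ih.1, ih.2]; exact hd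
    have s1 : σ (a + -k + (-1), b) = σ (a + -k, b) :=
      ((key σ h (a + -k) b).2.2.2.2.1).resolve_right hne
    have K2 := (key σ h (a + -k) (b+1)).2.2.2.2.2
    rw [show b+1+(-1) = b from by ring] at K2
    have s2 : σ (a + -k + (-1), b+1) = σ (a + -k, b+1) := by
      rcases K2 with h' | h'
      · exact h'
      · exact absurd h'.symm hne
    rw [show a + (-(k:ℤ) - 1) = a + -k + (-1) from by ring]
    exact ⟨s1.trans ih.1, s2.trans ih.2⟩

/-- A horizontal break propagates vertically: the two columns are constant. -/
lemma propH (σ : ℤ × ℤ → Bool)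
    (h : ∀ x : ℤ × ℤ, 3 ≤ (nbrOffsets.filter (fun d => σ (x + d) = σ x)).card)
    (a b : ℤ) (hd : σ (a+1, b) ≠ σ (a, b)) :
    ∀ j : ℤ, σ (a, b+j) = σ (a, b) ∧ σ (a+1, b+j) = σ (a+1, b) := by
  intro j
  induction j using Int.induction_on with
  | zero => simp
  | succ k ih =>
    have hne : σ (a+1, b+k) ≠ σ (a, b+k) := by rw [ih.1, ih.2]; exact hd
    have s1 : σ (a, b+k+1) = σ (a, b+k) :=
      ((key σ h a (b+k)).2.2.1).resolve_left hne
    have K2 := (key σ h (a+1) (b+k)).2.2.2.2.1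
    rw [show a+1+(-1) = a from by ring] at K2
    have s2 : σ (a+1, b+k+1) = σ (a+1, b+k) := by
      rcases K2 with h' | h'
      · exact absurd h'.symm hne
      · exact h'
    rw [show b + ((k:ℤ)+1) = b + k + 1 from by ring]
    exact ⟨s1.trans ih.1, s2.trans ih.2⟩
  | pred k ih =>
    have hne : σ (a+1, b + -k) ≠ σ (a, b + -k) := by rw [ih.1, ih.2]; exact hd
    have s1 : σ (a, b + -k + (-1)) = σ (a, b + -k) :=
      ((key σ h a (b + -k)).2.2.2.1).resolve_left hne
    have K2 := (key σ h (a+1) (b + -k)).2.2.2.2.2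
    rw [show a+1+(-1) = a from by ring] at K2
    have s2 : σ (a+1, b + -k + (-1)) = σ (a+1, b + -k) := by
      rcases K2 with h' | h'
      · exact absurd h'.symm hne
      · exact h'
    rw [show b + (-(k:ℤ) - 1) = b + -k + (-1) from by ring]
    exact ⟨s1.trans ih.1, s2.trans ih.2⟩

/-- A spin configuration `σ : ℤ × ℤ → Bool` has every site agreeing with at least three of
its four nearest neighbors if and only if it is a "striped" configuration coming from some
`f : ℤ → Bool` with no two sign changes at consecutive positions. -/
theorem stmt0 (σ : ℤ × ℤ → Bool) :
    (∀ x : ℤ × ℤ, 3 ≤ (nbrOffsets.filter (fun d => σ (x + d) = σ x)).card) ↔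
      ∃ f : ℤ → Bool,
        (∀ n : ℤ, f n = f (n + 1) ∨ f (n + 1) = f (n + 2)) ∧
        ((∀ p : ℤ × ℤ, σ p = f p.1) ∨ (∀ p : ℤ × ℤ, σ p = f p.2)) := by
  constructor
  · intro h
    by_cases hv : ∃ a b : ℤ, σ (a, b+1) ≠ σ (a, b)
    · obtain ⟨a0, b0, hd⟩ := hv
      have rows := propV σ h a0 b0 hd
      have hh : ∀ a b : ℤ, σ (a+1, b) = σ (a, b) := by
        intro a b
        by_contra hH
        have cols := propH σ h a b hH
        have r1 := (rows (a - a0)).1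
        have r2 := (rows (a - a0)).2
        rw [show a0 + (a - a0) = a from by ring] at r1 r2
        have c1 := (cols (b0 - b)).1
        have c2 := (cols (b0 + 1 - b)).1
        rw [show b + (b0 - b) = b0 from by ring] at c1
        rw [show b + (b0 + 1 - b) = b0 + 1 from by ring] at c2
        apply hd
        rw [← r1, ← r2, c1, c2]
      refine ⟨fun j => σ (0, j), ?_, Or.inr ?_⟩
      · intro n
        have K := (key σ h 0 (n+1)).2.1
        rw [show n+1+1 = n+2 from by ring, show n+1+(-1) = n from by ring] at K
        rcases K with K | K
        · exact Or.inr K.symm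
        · exact Or.inl K
      · rintro ⟨a, b⟩
        show σ (a, b) = σ (0, b)
        induction a using Int.induction_on with
        | zero => rfl
        | succ k ih => exact (hh k b).trans ih
        | pred k ih =>
          have t := hh (-k-1) b
          rw [show -(k:ℤ)-1+1 = -k from by ring] at t
          exact t.symm.trans ih
    · push_neg at hv
      refine ⟨fun i => σ (i, 0), ?_, Or.inl ?_⟩
      · intro n
        have K := (key σ h (n+1) 0).1
        rw [show n+1+1 = n+2 from by ring, show n+1+(-1) = n from by ring] at K
        rcases K with K | K
        · exact Or.inr K.symm
        · exact Or.inl K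
      · rintro ⟨a, b⟩
        show σ (a, b) = σ (a, 0)
        induction b using Int.induction_on with
        | zero => rfl
        | succ k ih => exact (hv a k).trans ih
        | pred k ih =>
          have t := hv a (-k-1)
          rw [show -(k:ℤ)-1+1 = -k from by ring] at t
          exact t.symm.trans ih
  · rintro ⟨f, hf, hcase | hcase⟩ <;> rintro ⟨a, b⟩
    · apply card_geV
      · rw [hcase (a, b+1), hcase (a, b)]
      · rw [hcase (a, b+(-1)), hcase (a, b)]
      · have K := hf (a + (-1))
        rw [show a+(-1)+1 = a from by ring, show a+(-1)+2 = a+1 from by ring] at K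
        rw [hcase (a+1, b), hcase (a+(-1), b), hcase (a, b)]
        rcases K with K | K
        · exact Or.inr K
        · exact Or.inl K.symm
    · apply card_geH
      · rw [hcase (a+1, b), hcase (a, b)]
      · rw [hcase (a+(-1), b), hcase (a, b)]
      · have K := hf (b + (-1))
        rw [show b+(-1)+1 = b from by ring, show b+(-1)+2 = b+1 from by ring] at K
        rw [hcase (a, b+1), hcase (a, b+(-1)), hcase (a, b)]
        rcases K with K | K
        · exact Or.inr K
        · exact Or.inl K.symm
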